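/- Let f_R(S_B) ∈ [0,1] with mean μ, suppose n·μ ≤ OPT and LB ≤ OPT, and let θ' = λ'/LB with λ' = (2+ε')·ℓ·n·ln n / ε'². If X is the sum of θ' i.i.d. copies of f_R(S_B), then P[X ≥ (1+ε')·OPT·θ'/n] ≤ n^{−ℓ}. -/

import Mathlib

open MeasureTheory ProbabilityTheory

lemma aux_log_ineq (x : ℝ) (hx : 0 ≤ x) : 2 * x ≤ (2 + x) * Real.log (1 + x) := by
  have hderiv : ∀ y : ℝ, 0 < 1 + y →
      HasDerivAt (fun y : ℝ => (2 + y) * Real.log (1 + y) - 2 * y)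
        (Real.log (1 + y) + (2 + y) * (1 / (1 + y)) - 2) y := by
    intro y hy
    have h1 : HasDerivAt (fun y : ℝ => 1 + y) 1 y := (hasDerivAt_id y).const_add 1
    have hlog : HasDerivAt (fun y : ℝ => Real.log (1 + y)) (1 / (1 + y)) y := by
      simpa using h1.log hy.ne'
    have h2 : HasDerivAt (fun y : ℝ => 2 + y) 1 y := (hasDerivAt_id y).const_add 2
    have h3 : HasDerivAt (fun y : ℝ => (2 + y) * Real.log (1 + y) - 2 * y)
        (1 * Real.log (1 + y) + (2 + y) * (1 / (1 + y)) - 2 * 1) y :=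
      (h2.mul hlog).sub ((hasDerivAt_id y).const_mul 2)
    convert h3 using 1
    ring
  have key : MonotoneOn (fun y : ℝ => (2 + y) * Real.log (1 + y) - 2 * y) (Set.Ici 0) := by
    apply monotoneOn_of_deriv_nonneg (convex_Ici 0)
    · intro y hy
      have hy1 : (0:ℝ) < 1 + y := by simp only [Set.mem_Ici] at hy; linarith
      exact ((hderiv y hy1).continuousAt).continuousWithinAt
    · intro y hy
      rw [interior_Ici] at hy
      have hy1 : (0:ℝ) < 1 + y := by have : (0:ℝ) < y := hy; linarith
      exact ((hderiv y hy1).differentiableAt).differentiableWithinAt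
    · intro y hy
      rw [interior_Ici] at hy
      have hy0 : (0:ℝ) < y := hy
      have hy1 : (0:ℝ) < 1 + y := by linarith
      rw [(hderiv y hy1).deriv]
      have hlog := Real.one_sub_inv_le_log_of_pos hy1
      have heq : (2 + y) * (1 / (1 + y)) = 1 + (1 + y)⁻¹ := by
        field_simp
        ring
      rw [heq]
      linarith
  have h0 : (0:ℝ) ∈ Set.Ici (0:ℝ) := Set.self_mem_Ici
  have := key h0 hx hx
  simp only [Real.log_one, add_zero, mul_zero, sub_zero, mul_zero, zero_add] at this
  norm_num at this
  linarith

lemma aux_mgf_le {Ω : Type*} [MeasurableSpace Ω] (P : Measure Ω)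
    [IsProbabilityMeasure P] (Y : Ω → ℝ) (μ t : ℝ) (ht : 0 ≤ t)
    (hY : Measurable Y) (hb : ∀ᵐ ω ∂P, Y ω ∈ Set.Icc (0:ℝ) 1)
    (hm : P[Y] = μ) :
    mgf Y P t ≤ Real.exp (μ * (Real.exp t - 1)) := by
  have hYint : Integrable Y P := by
    refine Integrable.mono' (integrable_const 1) hY.aestronglyMeasurable ?_
    filter_upwards [hb] with ω hω
    rw [Real.norm_eq_abs, abs_le]; exact ⟨by linarith [hω.1], hω.2⟩
  have hpt : ∀ᵐ ω ∂P, Real.exp (t * Y ω) ≤ 1 + Y ω * (Real.exp t - 1) := by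
    filter_upwards [hb] with ω hω
    have h1 : 0 ≤ 1 - Y ω := by linarith [hω.2]
    have h2 : 0 ≤ Y ω := hω.1
    have hc := convexOn_exp.2 (Set.mem_univ (0:ℝ)) (Set.mem_univ t) h1 h2
      (by ring : (1 - Y ω) + Y ω = 1)
    simp only [smul_eq_mul, mul_zero, zero_add, Real.exp_zero] at hc
    calc Real.exp (t * Y ω) = Real.exp (Y ω * t) := by rw [mul_comm]
    _ ≤ (1 - Y ω) * 1 + Y ω * Real.exp t := by simpa using hc
    _ = 1 + Y ω * (Real.exp t - 1) := by ring
  have hint1 : Integrable (fun ω => Real.exp (t * Y ω)) P := by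
    refine Integrable.mono' (integrable_const (Real.exp t))
      ((hY.const_mul t).exp).aestronglyMeasurable ?_
    filter_upwards [hb] with ω hω
    rw [Real.norm_eq_abs, abs_of_pos (Real.exp_pos _), Real.exp_le_exp]
    nlinarith [hω.1, hω.2]
  have hint2 : Integrable (fun ω => 1 + Y ω * (Real.exp t - 1)) P :=
    (integrable_const 1).add (hYint.mul_const _)
  have h1 : mgf Y P t ≤ ∫ ω, (1 + Y ω * (Real.exp t - 1)) ∂P :=
    integral_mono_ae hint1 hint2 hpt
  have h2 : ∫ ω, (1 + Y ω * (Real.exp t - 1)) ∂P = 1 + μ * (Real.exp t - 1) := by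
    rw [integral_add (integrable_const 1) (hYint.mul_const _), integral_const,
      integral_mul_const, hm]
    simp
  rw [h2] at h1
  calc mgf Y P t ≤ 1 + μ * (Real.exp t - 1) := h1
  _ ≤ Real.exp (μ * (Real.exp t - 1)) := by linarith [Real.add_one_le_exp (μ * (Real.exp t - 1))]

/-- Key estimate of the RefineLB correctness lemma: with `μ = E[f_R(S_B')]`,
`n·μ ≤ OPT`, `LB ≤ OPT` and `θ' = λ'/LB` where `λ' = (2+ε')ℓ n ln n / ε'²`,
the sum `X` of `θ'` i.i.d. copies of `f_R(S_B')` satisfies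
`P[X ≥ (1+ε')·OPT·θ'/n] ≤ n^{−ℓ}`. -/
theorem stmt_12 {Ω : Type*} [MeasurableSpace Ω] (P : Measure Ω)
    [IsProbabilityMeasure P] (n : ℕ) (θ' : ℕ) (ε' ℓ OPT LB μ : ℝ)
    (X : Fin θ' → Ω → ℝ)
    (hn : 2 ≤ n) (hε' : 0 < ε') (hℓ : (1 : ℝ) / 2 ≤ ℓ)
    (hOPT : 0 < OPT) (hLB : 0 < LB) (hLBOPT : LB ≤ OPT)
    (hμ : μ ∈ Set.Icc (0 : ℝ) 1) (hμOPT : (n : ℝ) * μ ≤ OPT)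
    (hmeas : ∀ i, Measurable (X i))
    (hindep : iIndepFun X P)
    (hident : ∀ i j, IdentDistrib (X i) (X j) P P)
    (hbound : ∀ i, ∀ᵐ ω ∂P, X i ω ∈ Set.Icc (0 : ℝ) 1)
    (hmean : ∀ i, P[X i] = μ)
    (hθ' : (θ' : ℝ) = (2 + ε') * ℓ * n * Real.log n / ε' ^ 2 / LB) :
    P {ω | (1 + ε') * OPT * θ' / n ≤ ∑ i, X i ω} ≤
      ENNReal.ofReal ((n : ℝ) ^ (-ℓ)) := by
  have hn1 : (1:ℝ) < n := by
    have : (2:ℝ) ≤ n := by exact_mod_cast hn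
    linarith
  have hnpos : (0:ℝ) < n := by linarith
  have hlogn : 0 < Real.log n := Real.log_pos hn1
  have hℓpos : (0:ℝ) < ℓ := by linarith
  set t : ℝ := Real.log (1 + ε') with ht_def
  have ht : 0 ≤ t := Real.log_nonneg (by linarith)
  have hexp_t : Real.exp t = 1 + ε' := Real.exp_log (by linarith)
  set a : ℝ := (1 + ε') * OPT * θ' / n with ha_def
  have hInt : ∀ i, Integrable (fun ω => Real.exp (t * X i ω)) P := by
    intro i
    refine Integrable.mono' (integrable_const (Real.exp t))
      (((hmeas i).const_mul t).exp).aestronglyMeasurable ?_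
    filter_upwards [hbound i] with ω hω
    rw [Real.norm_eq_abs, abs_of_pos (Real.exp_pos _), Real.exp_le_exp]
    nlinarith [hω.1, hω.2]
  have hIntSum : Integrable (fun ω => Real.exp (t * (∑ i, X i) ω)) P :=
    hindep.integrable_exp_mul_sum hmeas (fun i _ => hInt i)
  have hcher := measure_ge_le_exp_mul_mgf (X := ∑ i, X i) (μ := P) a ht hIntSum
  have hmgf : mgf (∑ i, X i) P t ≤ Real.exp ((θ' : ℝ) * (μ * ε')) := by
    rw [hindep.mgf_sum hmeas]
    calc ∏ i, mgf (X i) P t ≤ ∏ _i : Fin θ', Real.exp (μ * (Real.exp t - 1)) := by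
          apply Finset.prod_le_prod
          · intro i _; exact mgf_nonneg
          · intro i _
            exact aux_mgf_le P (X i) μ t ht (hmeas i) (hbound i) (hmean i)
    _ = Real.exp ((θ' : ℝ) * (μ * ε')) := by
          rw [Finset.prod_const, ← Real.exp_nat_mul]
          simp [hexp_t]
  have hμ0 : 0 ≤ μ := hμ.1
  have hθpos : (0:ℝ) < θ' := by rw [hθ']; positivity
  -- key numeric inequality
  have hnum : Real.exp (-t * a) * Real.exp ((θ' : ℝ) * (μ * ε')) ≤ (n : ℝ) ^ (-ℓ) := by
    rw [← Real.exp_add, Real.rpow_def_of_pos hnpos, Real.exp_le_exp]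
    have hK0 : (θ' : ℝ) * LB / n = (2 + ε') * ℓ * Real.log n / ε' ^ 2 := by
      rw [hθ']; field_simp
    have hμn : μ ≤ OPT / n := by
      rw [le_div_iff₀ hnpos]; linarith [hμOPT]
    have hlog2 : 2 * ε' ≤ (2 + ε') * t := aux_log_ineq ε' hε'.le
    have hfac : ε' ^ 2 / (2 + ε') ≤ (1 + ε') * t - ε' := by
      rw [div_le_iff₀ (by linarith : (0:ℝ) < 2 + ε')]
      nlinarith [hlog2, ht]
    set K : ℝ := (θ' : ℝ) * OPT / n with hK_def
    have hKge : (2 + ε') * ℓ * Real.log n / ε' ^ 2 ≤ K := by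
      rw [← hK0, hK_def]
      gcongr
    have hc0 : (0:ℝ) ≤ ε' ^ 2 / (2 + ε') := by positivity
    have hK00 : (0:ℝ) ≤ (2 + ε') * ℓ * Real.log n / ε' ^ 2 := by positivity
    have hprod : ((2 + ε') * ℓ * Real.log n / ε' ^ 2) * (ε' ^ 2 / (2 + ε')) ≤
        K * ((1 + ε') * t - ε') :=
      mul_le_mul hKge hfac hc0 (le_trans hK00 hKge)
    have hprodeq : ((2 + ε') * ℓ * Real.log n / ε' ^ 2) * (ε' ^ 2 / (2 + ε')) =
        ℓ * Real.log n := by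
      field_simp
    rw [hprodeq] at hprod
    have hμK : (θ' : ℝ) * (μ * ε') ≤ ε' * K := by
      rw [hK_def]
      have := mul_le_mul_of_nonneg_left hμn (by positivity : (0:ℝ) ≤ (θ' : ℝ) * ε')
      calc (θ' : ℝ) * (μ * ε') = ((θ' : ℝ) * ε') * μ := by ring
      _ ≤ ((θ' : ℝ) * ε') * (OPT / n) := this
      _ = ε' * ((θ' : ℝ) * OPT / n) := by ring
    have hta : t * a = K * ((1 + ε') * t) := by
      rw [ha_def, hK_def]; ring
    nlinarith [hprod, hμK, hta]
  -- conclude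
  have hS : {ω | (1 + ε') * OPT * θ' / n ≤ ∑ i, X i ω} =
      {ω | a ≤ (∑ i, X i) ω} := by
    simp [ha_def, Finset.sum_apply]
  rw [hS, ← ENNReal.ofReal_toReal (measure_ne_top P _)]
  apply ENNReal.ofReal_le_ofReal
  calc (P {ω | a ≤ (∑ i, X i) ω}).toReal
      ≤ Real.exp (-t * a) * mgf (∑ i, X i) P t := hcher
  _ ≤ Real.exp (-t * a) * Real.exp ((θ' : ℝ) * (μ * ε')) := by
      exact mul_le_mul_of_nonneg_left hmgf (le_of_lt (Real.exp_pos _))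
  _ ≤ (n : ℝ) ^ (-ℓ) := hnum
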